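/- Fix 0 < μ < v̄. Let prices satisfy 0 < v₁ < μ ≤ v₂ ≤ v̄ and let x₁ ∈ (0, 1], x₂ = 1 − x₁. Then the competitive ratio of the 2-level mechanism posting v₁ with probability x₁ and v₂ with probability x₂ over the mean ambiguity set, i.e., inf_{F ∈ 𝓕_mean} ( v₁x₁F([v₁, v̄]) + v₂x₂F([v₂, v̄]) ) / OPT(F), equals min{ (v₁x₁ + v₂x₂)/v̄, (μ − v₁)(v₁x₁ + v₂x₂)/(v₁(v̄ − v₁)), v₁x₁/v₂, x₁(μ − v₁)/(v₂ − v₁) }. -/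

import Mathlib

open MeasureTheory Set

noncomputable section

/-- Hindsight optimal revenue: `OPT(F) = sup_{p ∈ [0, v̄]} p · F([p, v̄])`. -/
def hindsightOpt (vbar : ℝ) (F : Measure ℝ) : ℝ :=
  ⨆ p : Icc (0 : ℝ) vbar, (p : ℝ) * (F (Icc (p : ℝ) vbar)).toReal

/-- The mean ambiguity set: probability measures on `[0, v̄]` with mean at least `μ`. -/
def Fmean (μ vbar : ℝ) : Set (Measure ℝ) :=
  {F | IsProbabilityMeasure F ∧ F (Icc (0 : ℝ) vbar) = 1 ∧ μ ≤ ∫ t, t ∂F}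

/-- Competitive ratio over the mean ambiguity set of the 2-level mechanism posting `v1` with
probability `x1` and `v2` with probability `1 - x1`. -/
def twoLevelCRmean (μ vbar v1 v2 x1 : ℝ) : ℝ :=
  ⨅ F : ↥(Fmean μ vbar),
    (v1 * x1 * (F.1 (Icc v1 vbar)).toReal + v2 * (1 - x1) * (F.1 (Icc v2 vbar)).toReal) /
      hindsightOpt vbar F.1

namespace Stmt7Aux

open Filter Topology

/-- Two-point measure with mass `q` at `c` and `1-q` at `a`. -/
def tp (a c q : ℝ) : Measure ℝ :=
  ENNReal.ofReal q • Measure.dirac c + ENNReal.ofReal (1 - q) • Measure.dirac a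

lemma tp_apply {a c q : ℝ} (hq0 : 0 ≤ q) (hq1 : q ≤ 1) {s : Set ℝ} (hs : MeasurableSet s)
    [Decidable (c ∈ s)] [Decidable (a ∈ s)] :
    ((tp a c q) s).toReal = (if c ∈ s then q else 0) + (if a ∈ s then 1 - q else 0) := by
  have h1 : (ENNReal.ofReal q).toReal = q := ENNReal.toReal_ofReal hq0
  have h2 : (ENNReal.ofReal (1 - q)).toReal = 1 - q := ENNReal.toReal_ofReal (by linarith)
  rw [tp, Measure.add_apply, Measure.smul_apply, Measure.smul_apply,
    Measure.dirac_apply' _ hs, Measure.dirac_apply' _ hs]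
  by_cases hc : c ∈ s <;> by_cases ha : a ∈ s <;>
    simp [indicator, hc, ha, ENNReal.toReal_add, ENNReal.ofReal_ne_top, h1, h2]

lemma tp_apply_of_mem {a c q : ℝ} (hq0 : 0 ≤ q) (hq1 : q ≤ 1) {s : Set ℝ}
    (hs : MeasurableSet s) (hc : c ∈ s) (ha : a ∈ s) : (tp a c q) s = 1 := by
  rw [tp, Measure.add_apply, Measure.smul_apply, Measure.smul_apply,
    Measure.dirac_apply' _ hs, Measure.dirac_apply' _ hs]
  simp only [indicator, hc, ha, if_pos, Pi.one_apply, smul_eq_mul, mul_one]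
  rw [← ENNReal.ofReal_add hq0 (by linarith), show q + (1 - q) = 1 by ring,
    ENNReal.ofReal_one]

lemma tp_prob {a c q : ℝ} (hq0 : 0 ≤ q) (hq1 : q ≤ 1) : IsProbabilityMeasure (tp a c q) :=
  ⟨tp_apply_of_mem hq0 hq1 MeasurableSet.univ (mem_univ c) (mem_univ a)⟩

lemma tp_integral {a c q : ℝ} (hq0 : 0 ≤ q) (hq1 : q ≤ 1) :
    ∫ t, t ∂(tp a c q) = q * c + (1 - q) * a := by
  have hic : Integrable (fun t : ℝ => t) (Measure.dirac c) :=
    (integrable_const c).congr (ae_eq_dirac (fun t : ℝ => t)).symm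
  have hia : Integrable (fun t : ℝ => t) (Measure.dirac a) :=
    (integrable_const a).congr (ae_eq_dirac (fun t : ℝ => t)).symm
  rw [tp, integral_add_measure (hic.smul_measure ENNReal.ofReal_ne_top)
    (hia.smul_measure ENNReal.ofReal_ne_top), integral_smul_measure, integral_smul_measure,
    integral_dirac, integral_dirac]
  simp [ENNReal.toReal_ofReal, hq0, sub_nonneg.2 hq1, smul_eq_mul]

lemma toReal_prob_le_one {F : Measure ℝ} [IsProbabilityMeasure F] (s : Set ℝ) :
    (F s).toReal ≤ 1 := by
  have := ENNReal.toReal_mono (by simp) (prob_le_one (μ := F) (s := s))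
  simpa using this

lemma opt_le {vbar : ℝ} (hv : 0 ≤ vbar) {F : Measure ℝ} {M : ℝ}
    (h : ∀ p : Icc (0 : ℝ) vbar, (p : ℝ) * (F (Icc (p : ℝ) vbar)).toReal ≤ M) :
    hindsightOpt vbar F ≤ M := by
  haveI : Nonempty (Icc (0 : ℝ) vbar) := ⟨⟨0, le_refl 0, hv⟩⟩
  exact ciSup_le h

lemma le_opt {vbar : ℝ} {F : Measure ℝ} [IsProbabilityMeasure F] {p : ℝ}
    (hp : p ∈ Icc (0 : ℝ) vbar) :
    p * (F (Icc p vbar)).toReal ≤ hindsightOpt vbar F := by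
  have hb : BddAbove (Set.range fun p : Icc (0 : ℝ) vbar =>
      (p : ℝ) * (F (Icc (p : ℝ) vbar)).toReal) := by
    refine ⟨vbar, ?_⟩
    rintro x ⟨⟨p, hp0, hpv⟩, rfl⟩
    calc p * (F (Icc p vbar)).toReal ≤ p * 1 :=
          mul_le_mul_of_nonneg_left (toReal_prob_le_one _) hp0
      _ = p := mul_one p
      _ ≤ vbar := hpv
  exact le_ciSup hb ⟨p, hp⟩

lemma opt_nonneg {vbar : ℝ} {F : Measure ℝ} : 0 ≤ hindsightOpt vbar F := by
  apply Real.iSup_nonneg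
  rintro ⟨p, hp0, hpv⟩
  exact mul_nonneg hp0 ENNReal.toReal_nonneg

lemma mean_bound {μ vbar v1 v2 : ℝ} {F : Measure ℝ} [IsProbabilityMeasure F]
    (hF : F (Icc (0 : ℝ) vbar) = 1) (hμ : μ ≤ ∫ t, t ∂F)
    (h10 : 0 ≤ v1) (h12 : v1 ≤ v2) (h2v : v2 ≤ vbar) :
    μ ≤ v1 + (v2 - v1) * (F (Icc v1 vbar)).toReal + (vbar - v2) * (F (Icc v2 vbar)).toReal := by
  have hnull : F ((Icc (0 : ℝ) vbar)ᶜ) = 0 := by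
    rw [measure_compl measurableSet_Icc (measure_ne_top F _), hF, measure_univ, tsub_self]
  have hae : ∀ᵐ t ∂F, t ∈ Icc (0 : ℝ) vbar := by
    rw [ae_iff]
    convert hnull using 2
    rfl
  set g : ℝ → ℝ := fun t => v1 + (Icc v1 vbar).indicator (fun _ => v2 - v1) t +
    (Icc v2 vbar).indicator (fun _ => vbar - v2) t with hg
  have hgle : ∀ᵐ t ∂F, t ≤ g t := by
    filter_upwards [hae] with t ht
    obtain ⟨ht0, htv⟩ := ht
    simp only [hg]
    by_cases h2 : v2 ≤ t
    · rw [Set.indicator_of_mem (mem_Icc.mpr ⟨le_trans h12 h2, htv⟩),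
        Set.indicator_of_mem (mem_Icc.mpr ⟨h2, htv⟩)]
      linarith
    · rw [Set.indicator_of_notMem (fun hmem => h2 (mem_Icc.mp hmem).1)]
      by_cases h1 : v1 ≤ t
      · rw [Set.indicator_of_mem (mem_Icc.mpr ⟨h1, htv⟩)]; linarith
      · rw [Set.indicator_of_notMem (fun hmem => h1 (mem_Icc.mp hmem).1)]; linarith
  have hint : Integrable (fun t : ℝ => t) F := by
    refine Integrable.mono' (integrable_const vbar) aestronglyMeasurable_id ?_
    filter_upwards [hae] with t ht
    rw [Real.norm_eq_abs, abs_of_nonneg ht.1]; exact ht.2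
  have hi1 : Integrable ((Icc v1 vbar).indicator (fun _ => v2 - v1)) F :=
    (integrable_const (v2 - v1)).indicator measurableSet_Icc
  have hi2 : Integrable ((Icc v2 vbar).indicator (fun _ => vbar - v2)) F :=
    (integrable_const (vbar - v2)).indicator measurableSet_Icc
  have hintg : Integrable g F := ((integrable_const v1).add hi1).add hi2
  calc μ ≤ ∫ t, t ∂F := hμ
    _ ≤ ∫ t, g t ∂F := integral_mono_ae hint hintg hgle
    _ = v1 + (v2 - v1) * (F (Icc v1 vbar)).toReal + (vbar - v2) * (F (Icc v2 vbar)).toReal := by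
        rw [hg]
        have e1 : Integrable (fun t : ℝ => v1 + (Icc v1 vbar).indicator (fun _ => v2 - v1) t) F :=
          (integrable_const v1).add hi1
        rw [integral_add e1 hi2, integral_add (integrable_const v1) hi1, integral_const,
          integral_indicator_const _ measurableSet_Icc, integral_indicator_const _ measurableSet_Icc]
        simp [measure_univ, smul_eq_mul, measureReal_def]
        ring

lemma lp {μ vbar v1 v2 x1 G1 G2 : ℝ} (hv1 : 0 < v1) (h1μ : v1 < μ) (hμ2 : μ ≤ v2)
    (h2v : v2 ≤ vbar) (hx0 : 0 < x1) (hx1 : x1 ≤ 1)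
    (hG2 : 0 ≤ G2) (hG21 : G2 ≤ G1) (hG1 : G1 ≤ 1)
    (hmean : μ ≤ v1 + (v2 - v1) * G1 + (vbar - v2) * G2) :
    min ((μ - v1) * (v1 * x1 + v2 * (1 - x1)) / (vbar - v1)) (v1 * x1 * (μ - v1) / (v2 - v1))
      ≤ v1 * x1 * G1 + v2 * (1 - x1) * G2 := by
  have hα : 0 < v1 * x1 := mul_pos hv1 hx0
  have hβ : 0 ≤ v2 * (1 - x1) := mul_nonneg (by linarith) (by linarith)
  have hγ : 0 < v2 - v1 := by linarith
  have hmean' : μ - v1 ≤ (v2 - v1) * G1 + (vbar - v2) * G2 := by linarith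
  rcases le_or_gt (v1 * x1 * (vbar - v2)) (v2 * (1 - x1) * (v2 - v1)) with hcase | hcase
  · refine le_trans (min_le_right _ _) ?_
    rw [div_le_iff₀ hγ]
    nlinarith [mul_le_mul_of_nonneg_left hmean' hα.le,
      mul_nonneg (sub_nonneg.2 hcase) hG2]
  · refine le_trans (min_le_left _ _) ?_
    rw [div_le_iff₀ (by linarith : (0 : ℝ) < vbar - v1)]
    nlinarith [mul_le_mul_of_nonneg_left hmean' (by positivity : (0:ℝ) ≤ v1 * x1 + v2 * (1 - x1)),
      mul_nonneg (sub_nonneg.2 hcase.le) (sub_nonneg.2 hG21)]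

end Stmt7Aux

set_option maxHeartbeats 1600000 in
/-- For `0 < v₁ < μ ≤ v₂ ≤ v̄` and `x₁ ∈ (0,1]`, the competitive ratio of the 2-level mechanism
over the mean ambiguity set equals the minimum of the four displayed quantities. -/
theorem stmt7 (μ vbar : ℝ) (hμ : 0 < μ) (hμv : μ < vbar)
    (v1 v2 x1 : ℝ) (hv1 : 0 < v1) (h1μ : v1 < μ) (hμ2 : μ ≤ v2) (h2v : v2 ≤ vbar)
    (hx0 : 0 < x1) (hx1 : x1 ≤ 1) :
    twoLevelCRmean μ vbar v1 v2 x1 =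
      min (min ((v1 * x1 + v2 * (1 - x1)) / vbar)
              ((μ - v1) * (v1 * x1 + v2 * (1 - x1)) / (v1 * (vbar - v1))))
          (min (v1 * x1 / v2) (x1 * (μ - v1) / (v2 - v1))) := by
  classical
  open Stmt7Aux Filter Topology in
  have h12 : v1 < v2 := lt_of_lt_of_le h1μ hμ2
  have hv0 : 0 < vbar := lt_trans hμ hμv
  have h1v : v1 < vbar := lt_trans h1μ hμv
  have hne1 : v1 ≠ 0 := hv1.ne'
  have hnev1 : vbar - v1 ≠ 0 := sub_ne_zero.mpr (ne_of_gt h1v)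
  have h2pos : 0 < v2 := lt_trans hv1 h12
  have hx2 : 0 ≤ 1 - x1 := by linarith
  set m := min (min ((v1 * x1 + v2 * (1 - x1)) / vbar)
              ((μ - v1) * (v1 * x1 + v2 * (1 - x1)) / (v1 * (vbar - v1))))
          (min (v1 * x1 / v2) (x1 * (μ - v1) / (v2 - v1))) with hm_def
  have hαβ : 0 < v1 * x1 + v2 * (1 - x1) := by nlinarith [mul_pos hv1 hx0, mul_nonneg h2pos.le hx2]
  have hm_pos : 0 < m := by
    refine lt_min (lt_min (div_pos hαβ hv0) ?_) (lt_min ?_ ?_)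
    · exact div_pos (mul_pos (by linarith) hαβ) (mul_pos hv1 (by linarith))
    · exact div_pos (mul_pos hv1 hx0) h2pos
    · exact div_pos (mul_pos hx0 (by linarith)) (by linarith)
  have hmem : ∀ a c q : ℝ, 0 ≤ q → q ≤ 1 → 0 ≤ a → a ≤ c → c ≤ vbar →
      μ ≤ q * c + (1 - q) * a → Stmt7Aux.tp a c q ∈ Fmean μ vbar := by
    intro a c q hq0 hq1 ha0 hac hcv hμle
    refine ⟨Stmt7Aux.tp_prob hq0 hq1, ?_, ?_⟩
    · exact Stmt7Aux.tp_apply_of_mem hq0 hq1 measurableSet_Icc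
        (mem_Icc.mpr ⟨le_trans ha0 hac, hcv⟩) (mem_Icc.mpr ⟨ha0, le_trans hac hcv⟩)
    · rw [Stmt7Aux.tp_integral hq0 hq1]; exact hμle
  haveI hne : Nonempty ↥(Fmean μ vbar) :=
    ⟨⟨_, hmem vbar vbar 0 le_rfl zero_le_one hv0.le le_rfl le_rfl (by linarith)⟩⟩
  have hbdd : BddBelow (Set.range fun F : ↥(Fmean μ vbar) =>
      (v1 * x1 * (F.1 (Icc v1 vbar)).toReal + v2 * (1 - x1) * (F.1 (Icc v2 vbar)).toReal) /
        hindsightOpt vbar F.1) := by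
    refine ⟨0, ?_⟩
    rintro x ⟨F, rfl⟩
    refine div_nonneg ?_ Stmt7Aux.opt_nonneg
    have := mul_pos hv1 hx0
    exact add_nonneg (mul_nonneg this.le ENNReal.toReal_nonneg)
      (mul_nonneg (mul_nonneg h2pos.le hx2) ENNReal.toReal_nonneg)
  -- generic upper bound via two-point measures
  have hub : ∀ a c q : ℝ, 0 < a → 0 ≤ q → q ≤ 1 → a ≤ c → c ≤ vbar →
      μ ≤ q * c + (1 - q) * a →
      twoLevelCRmean μ vbar v1 v2 x1 ≤
        (v1 * x1 * ((if c ∈ Icc v1 vbar then q else 0) + (if a ∈ Icc v1 vbar then 1 - q else 0)) +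
         v2 * (1 - x1) * ((if c ∈ Icc v2 vbar then q else 0) +
           (if a ∈ Icc v2 vbar then 1 - q else 0))) / a := by
    intro a c q ha0 hq0 hq1 hac hcv hμle
    have hFm := hmem a c q hq0 hq1 ha0.le hac hcv hμle
    haveI := Stmt7Aux.tp_prob (a := a) (c := c) hq0 hq1
    have h1 : twoLevelCRmean μ vbar v1 v2 x1 ≤
        (v1 * x1 * ((Stmt7Aux.tp a c q) (Icc v1 vbar)).toReal +
          v2 * (1 - x1) * ((Stmt7Aux.tp a c q) (Icc v2 vbar)).toReal) /
          hindsightOpt vbar (Stmt7Aux.tp a c q) :=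
      ciInf_le hbdd (⟨_, hFm⟩ : ↥(Fmean μ vbar))
    have hOPTa : a ≤ hindsightOpt vbar (Stmt7Aux.tp a c q) := by
      have h2 := Stmt7Aux.le_opt (F := Stmt7Aux.tp a c q) (p := a)
        (mem_Icc.mpr ⟨ha0.le, le_trans hac hcv⟩)
      rwa [Stmt7Aux.tp_apply_of_mem hq0 hq1 measurableSet_Icc (mem_Icc.mpr ⟨hac, hcv⟩)
        (mem_Icc.mpr ⟨le_rfl, le_trans hac hcv⟩), ENNReal.toReal_one, mul_one] at h2
    have hnum : 0 ≤ v1 * x1 * ((Stmt7Aux.tp a c q) (Icc v1 vbar)).toReal +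
        v2 * (1 - x1) * ((Stmt7Aux.tp a c q) (Icc v2 vbar)).toReal :=
      add_nonneg (mul_nonneg (mul_nonneg hv1.le hx0.le) ENNReal.toReal_nonneg)
        (mul_nonneg (mul_nonneg h2pos.le hx2) ENNReal.toReal_nonneg)
    refine le_trans h1 (le_trans (div_le_div_of_nonneg_left hnum ha0 hOPTa) (le_of_eq ?_))
    rw [Stmt7Aux.tp_apply hq0 hq1 measurableSet_Icc, Stmt7Aux.tp_apply hq0 hq1 measurableSet_Icc]
  refine le_antisymm ?_ ?_
  · -- upper bound: inf ≤ min of the four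
    have hA : twoLevelCRmean μ vbar v1 v2 x1 ≤ (v1 * x1 + v2 * (1 - x1)) / vbar := by
      have h := hub vbar vbar 0 hv0 le_rfl zero_le_one le_rfl le_rfl (by linarith)
      simp only [if_pos (mem_Icc.mpr ⟨h1v.le, le_rfl⟩), if_pos (mem_Icc.mpr ⟨h2v, le_rfl⟩)] at h
      refine le_trans h (le_of_eq ?_)
      norm_num
    have hB : twoLevelCRmean μ vbar v1 v2 x1 ≤
        (μ - v1) * (v1 * x1 + v2 * (1 - x1)) / (v1 * (vbar - v1)) := by
      have hten : Tendsto (fun a : ℝ => (v1 * x1 + v2 * (1 - x1)) * ((μ - a) / (vbar - a)) / a)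
          (nhdsWithin v1 (Iio v1))
          (nhds ((μ - v1) * (v1 * x1 + v2 * (1 - x1)) / (v1 * (vbar - v1)))) := by
        have hval : (v1 * x1 + v2 * (1 - x1)) * ((μ - v1) / (vbar - v1)) / v1 =
            (μ - v1) * (v1 * x1 + v2 * (1 - x1)) / (v1 * (vbar - v1)) := by
          field_simp
        rw [← hval]
        have hcont : ContinuousAt
            (fun a : ℝ => (v1 * x1 + v2 * (1 - x1)) * ((μ - a) / (vbar - a)) / a) v1 := by
          refine ContinuousAt.div ?_ continuousAt_id hne1
          exact continuousAt_const.mul (((continuousAt_const.sub continuousAt_id)).div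
            ((continuousAt_const.sub continuousAt_id)) hnev1)
        exact hcont.tendsto.mono_left nhdsWithin_le_nhds
      refine ge_of_tendsto hten ?_
      filter_upwards [Ioo_mem_nhdsLT hv1] with a ha
      obtain ⟨ha0, hav1⟩ := ha
      have hvba : 0 < vbar - a := by linarith
      set q := (μ - a) / (vbar - a) with hq_def
      have hq0 : 0 ≤ q := div_nonneg (by linarith) hvba.le
      have hq1 : q ≤ 1 := by rw [hq_def, div_le_one hvba]; linarith
      have hqmul : q * (vbar - a) = μ - a := div_mul_cancel₀ _ hvba.ne'
      have hmean : μ ≤ q * vbar + (1 - q) * a := by nlinarith [hqmul]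
      have h := hub a vbar q ha0 hq0 hq1 (by linarith) le_rfl hmean
      rw [if_pos (mem_Icc.mpr ⟨h1v.le, le_rfl⟩), if_pos (mem_Icc.mpr ⟨h2v, le_rfl⟩),
        if_neg (fun hmemx => absurd (mem_Icc.mp hmemx).1 (not_le.mpr hav1)),
        if_neg (fun hmemx => absurd (mem_Icc.mp hmemx).1 (not_le.mpr (lt_trans hav1 h12)))] at h
      refine le_trans h (le_of_eq ?_)
      ring
    have hC : twoLevelCRmean μ vbar v1 v2 x1 ≤ v1 * x1 / v2 := by
      rcases eq_or_lt_of_le hμ2 with heq | hlt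
      · -- μ = v2, hence v2 < vbar
        have h2v' : v2 < vbar := by rw [← heq]; exact hμv
        have hnev2 : vbar - v2 ≠ 0 := sub_ne_zero.mpr (ne_of_gt h2v')
        have hten : Tendsto (fun b : ℝ => (v1 * x1 + v2 * (1 - x1) * ((μ - b) / (vbar - b))) / b)
            (nhdsWithin v2 (Iio v2)) (nhds (v1 * x1 / v2)) := by
        
          have hval : (v1 * x1 + v2 * (1 - x1) * ((μ - v2) / (vbar - v2))) / v2 = v1 * x1 / v2 := by
            rw [← heq]
            simp
          rw [← hval]
          have hcont : ContinuousAt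
              (fun b : ℝ => (v1 * x1 + v2 * (1 - x1) * ((μ - b) / (vbar - b))) / b) v2 := by
            refine ContinuousAt.div ?_ continuousAt_id h2pos.ne'
            exact continuousAt_const.add (continuousAt_const.mul
              (((continuousAt_const.sub continuousAt_id)).div
                ((continuousAt_const.sub continuousAt_id)) hnev2))
          exact hcont.tendsto.mono_left nhdsWithin_le_nhds
        refine ge_of_tendsto hten ?_
        filter_upwards [Ioo_mem_nhdsLT h12] with b hb
        obtain ⟨hb1, hb2⟩ := hb
        have hb0 : 0 < b := lt_trans hv1 hb1
        have hbμ : b < μ := by rw [heq]; exact hb2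
        have hvbb : 0 < vbar - b := by linarith
        set q := (μ - b) / (vbar - b) with hq_def
        have hq0 : 0 ≤ q := div_nonneg (by linarith) hvbb.le
        have hq1 : q ≤ 1 := by rw [hq_def, div_le_one hvbb]; linarith
        have hqmul : q * (vbar - b) = μ - b := div_mul_cancel₀ _ hvbb.ne'
        have hmean : μ ≤ q * vbar + (1 - q) * b := by nlinarith [hqmul]
        have h := hub b vbar q hb0 hq0 hq1 (by linarith) le_rfl hmean
        rw [if_pos (mem_Icc.mpr ⟨h1v.le, le_rfl⟩), if_pos (mem_Icc.mpr ⟨h2v, le_rfl⟩),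
          if_pos (mem_Icc.mpr ⟨hb1.le, by linarith⟩),
          if_neg (fun hmemx => absurd (mem_Icc.mp hmemx).1 (not_le.mpr hb2))] at h
        refine le_trans h (le_of_eq ?_)
        ring
      · -- μ < v2: point masses at b ∈ (μ, v2)
        refine ge_of_tendsto (x := nhdsWithin v2 (Iio v2)) (f := fun b : ℝ => v1 * x1 / b) ?_ ?_
        · exact (ContinuousAt.div continuousAt_const continuousAt_id
            h2pos.ne').tendsto.mono_left nhdsWithin_le_nhds
        · filter_upwards [Ioo_mem_nhdsLT hlt] with b hb
          obtain ⟨hbμ, hb2⟩ := hb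
          have hb0 : 0 < b := lt_trans hμ hbμ
          have h := hub b b 0 hb0 le_rfl zero_le_one le_rfl (by linarith)
            (by ring_nf; linarith)
          simp only [if_pos (mem_Icc.mpr ⟨(by linarith : v1 ≤ b), (by linarith : b ≤ vbar)⟩),
            if_neg (fun hmemx : b ∈ Icc v2 vbar => absurd (mem_Icc.mp hmemx).1 (not_le.mpr hb2))] at h
          refine le_trans h (le_of_eq ?_)
          ring
    have hD : twoLevelCRmean μ vbar v1 v2 x1 ≤ x1 * (μ - v1) / (v2 - v1) := by
      rcases eq_or_lt_of_le hμ2 with heq | hlt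
      · -- μ = v2: then C ≤ D
        refine le_trans hC ?_
        rw [div_le_div_iff₀ h2pos (by linarith : (0:ℝ) < v2 - v1), heq]
        nlinarith [mul_nonneg hx0.le (sq_nonneg (v2 - v1))]
      · -- μ < v2
        refine ge_of_tendsto (x := nhdsWithin v2 (Iio v2)) (f := fun b : ℝ => x1 * (μ - v1) / (b - v1)) ?_ ?_
        · have hcont : ContinuousAt (fun b : ℝ => x1 * (μ - v1) / (b - v1)) v2 :=
            ContinuousAt.div continuousAt_const (continuousAt_id.sub continuousAt_const)
              (sub_ne_zero.mpr (ne_of_gt h12))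
          exact hcont.tendsto.mono_left nhdsWithin_le_nhds
        · filter_upwards [Ioo_mem_nhdsLT hlt] with b hb
          obtain ⟨hbμ, hb2⟩ := hb
          have hbv1 : v1 < b := lt_trans h1μ hbμ
          have hnbv1 : b - v1 ≠ 0 := sub_ne_zero.mpr (ne_of_gt hbv1)
          refine ge_of_tendsto (x := nhdsWithin v1 (Iio v1)) (f := fun a : ℝ => v1 * x1 * ((μ - a) / (b - a)) / a) ?_ ?_
          · have hval : v1 * x1 * ((μ - v1) / (b - v1)) / v1 = x1 * (μ - v1) / (b - v1) := by
              field_simp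
            rw [← hval]
            have hcont : ContinuousAt (fun a : ℝ => v1 * x1 * ((μ - a) / (b - a)) / a) v1 := by
              refine ContinuousAt.div ?_ continuousAt_id hne1
              exact continuousAt_const.mul (((continuousAt_const.sub continuousAt_id)).div
                ((continuousAt_const.sub continuousAt_id)) hnbv1)
            exact hcont.tendsto.mono_left nhdsWithin_le_nhds
          · filter_upwards [Ioo_mem_nhdsLT hv1] with a ha
            obtain ⟨ha0, hav1⟩ := ha
            have hba : 0 < b - a := by linarith
            set q := (μ - a) / (b - a) with hq_def
            have hq0 : 0 ≤ q := div_nonneg (by linarith) hba.le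
            have hq1 : q ≤ 1 := by rw [hq_def, div_le_one hba]; linarith
            have hqmul : q * (b - a) = μ - a := div_mul_cancel₀ _ hba.ne'
            have hmean : μ ≤ q * b + (1 - q) * a := by nlinarith [hqmul]
            have h := hub a b q ha0 hq0 hq1 (by linarith) (by linarith) hmean
            rw [if_pos (mem_Icc.mpr ⟨(by linarith : v1 ≤ b), (by linarith : b ≤ vbar)⟩),
              if_neg (fun hmemx => absurd (mem_Icc.mp hmemx).1 (not_le.mpr hav1)),
              if_neg (fun hmemx => absurd (mem_Icc.mp hmemx).1 (not_le.mpr hb2)),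
              if_neg (fun hmemx => absurd (mem_Icc.mp hmemx).1
                (not_le.mpr (lt_trans hav1 h12)))] at h
            refine le_trans h (le_of_eq ?_)
            ring
    exact le_min (le_min hA hB) (le_min hC hD)
  · -- lower bound
    rw [twoLevelCRmean]
    refine le_ciInf ?_
    rintro ⟨F, hprob, hsupp, hmean⟩
    haveI := hprob
    simp only
    set G1 := (F (Icc v1 vbar)).toReal with hG1_def
    set G2 := (F (Icc v2 vbar)).toReal with hG2_def
    have hG2nn : 0 ≤ G2 := ENNReal.toReal_nonneg
    have hG21 : G2 ≤ G1 := ENNReal.toReal_mono (measure_ne_top F _)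
      (measure_mono (Icc_subset_Icc_left h12.le))
    have hG11 : G1 ≤ 1 := Stmt7Aux.toReal_prob_le_one _
    have hmb := Stmt7Aux.mean_bound hsupp hmean hv1.le h12.le h2v
    rw [← hG1_def, ← hG2_def] at hmb
    have hG1pos : 0 < G1 := by nlinarith [mul_le_mul_of_nonneg_left hG21 (by linarith : (0:ℝ) ≤ vbar - v2)]
    have hOPTpos : 0 < hindsightOpt vbar F :=
      lt_of_lt_of_le (mul_pos hv1 hG1pos) (by
        have := Stmt7Aux.le_opt (F := F) (p := v1) (mem_Icc.mpr ⟨hv1.le, h1v.le⟩)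
        rwa [← hG1_def] at this)
    have hR_ge : ∀ p : Icc (0:ℝ) vbar, (p:ℝ) * (F (Icc (p:ℝ) vbar)).toReal ≤
        (v1 * x1 * G1 + v2 * (1 - x1) * G2) / m := by
      rintro ⟨p, hp0, hpv⟩
      rw [le_div_iff₀ hm_pos]
      rcases le_or_gt p v1 with hcase | hcase
      · have hp1 : p * (F (Icc p vbar)).toReal ≤ v1 := by
          have := mul_le_mul_of_nonneg_left (Stmt7Aux.toReal_prob_le_one (F := F)
            (Icc p vbar)) hp0
          rw [mul_one] at this
          exact le_trans this hcase
        have hlp := Stmt7Aux.lp hv1 h1μ hμ2 h2v hx0 hx1 hG2nn hG21 hG11 hmb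
        have hmB : m * v1 ≤ (μ - v1) * (v1 * x1 + v2 * (1 - x1)) / (vbar - v1) := by
          have h1 : m ≤ (μ - v1) * (v1 * x1 + v2 * (1 - x1)) / (v1 * (vbar - v1)) :=
            le_trans (min_le_left _ _) (min_le_right _ _)
          calc m * v1 ≤ ((μ - v1) * (v1 * x1 + v2 * (1 - x1)) / (v1 * (vbar - v1))) * v1 :=
                mul_le_mul_of_nonneg_right h1 hv1.le
            _ = (μ - v1) * (v1 * x1 + v2 * (1 - x1)) / (vbar - v1) := by
                field_simp
        have hmD : m * v1 ≤ v1 * x1 * (μ - v1) / (v2 - v1) := by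
          have h1 : m ≤ x1 * (μ - v1) / (v2 - v1) :=
            le_trans (min_le_right _ _) (min_le_right _ _)
          calc m * v1 ≤ (x1 * (μ - v1) / (v2 - v1)) * v1 :=
                mul_le_mul_of_nonneg_right h1 hv1.le
            _ = v1 * x1 * (μ - v1) / (v2 - v1) := by ring
        calc p * (F (Icc p vbar)).toReal * m ≤ v1 * m :=
              mul_le_mul_of_nonneg_right hp1 hm_pos.le
          _ = m * v1 := mul_comm _ _
          _ ≤ min ((μ - v1) * (v1 * x1 + v2 * (1 - x1)) / (vbar - v1))
                (v1 * x1 * (μ - v1) / (v2 - v1)) := le_min hmB hmD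
          _ ≤ v1 * x1 * G1 + v2 * (1 - x1) * G2 := hlp
      · rcases le_or_gt p v2 with hcase2 | hcase2
        · have hFp : (F (Icc p vbar)).toReal ≤ G1 :=
            ENNReal.toReal_mono (measure_ne_top F _) (measure_mono (Icc_subset_Icc_left hcase.le))
          have hmC : m ≤ v1 * x1 / v2 := le_trans (min_le_right _ _) (min_le_left _ _)
          have key : p * (F (Icc p vbar)).toReal * m ≤ v2 * G1 * (v1 * x1 / v2) :=
            mul_le_mul (mul_le_mul hcase2 hFp ENNReal.toReal_nonneg h2pos.le) hmC hm_pos.le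
              (mul_nonneg h2pos.le hG1pos.le)
          calc p * (F (Icc p vbar)).toReal * m ≤ v2 * G1 * (v1 * x1 / v2) := key
            _ = v1 * x1 * G1 := by field_simp
            _ ≤ v1 * x1 * G1 + v2 * (1 - x1) * G2 :=
                le_add_of_nonneg_right (mul_nonneg (mul_nonneg h2pos.le hx2) hG2nn)
        · have hFp : (F (Icc p vbar)).toReal ≤ G2 :=
            ENNReal.toReal_mono (measure_ne_top F _) (measure_mono (Icc_subset_Icc_left hcase2.le))
          have hmA : m ≤ (v1 * x1 + v2 * (1 - x1)) / vbar :=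
            le_trans (min_le_left _ _) (min_le_left _ _)
          have key : p * (F (Icc p vbar)).toReal * m ≤
              vbar * G2 * ((v1 * x1 + v2 * (1 - x1)) / vbar) :=
            mul_le_mul (mul_le_mul hpv hFp ENNReal.toReal_nonneg hv0.le) hmA hm_pos.le
              (mul_nonneg hv0.le hG2nn)
          calc p * (F (Icc p vbar)).toReal * m ≤
              vbar * G2 * ((v1 * x1 + v2 * (1 - x1)) / vbar) := key
            _ = (v1 * x1 + v2 * (1 - x1)) * G2 := by field_simp
            _ ≤ v1 * x1 * G1 + v2 * (1 - x1) * G2 := by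
                nlinarith [mul_le_mul_of_nonneg_left hG21 (mul_pos hv1 hx0).le]
    have hOPT_le := Stmt7Aux.opt_le hv0.le hR_ge
    rw [le_div_iff₀ hOPTpos]
    calc m * hindsightOpt vbar F ≤ m * ((v1 * x1 * G1 + v2 * (1 - x1) * G2) / m) :=
          mul_le_mul_of_nonneg_left hOPT_le hm_pos.le
      _ = v1 * x1 * G1 + v2 * (1 - x1) * G2 := by field_simp

end
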